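/- For θ > -1/2 and q > -1/2, the Mellin/Gaussian-mixture identity holds: (2/E(|B|^{2θ})) ∫_0^∞ λ^{2θ} μ(q, λ) φ(λ) dλ = Γ(θ+1) Γ(q+1/2) / (Γ(1/2) Γ(q+θ+1)), where μ(q, λ) = E[(B²/(λ²+B²))^q] for B standard Gaussian, φ the standard Gaussian density, and E(|B|^{2θ}) = 2^θ Γ(θ+1/2)/√π. -/

import Mathlib

open Real MeasureTheory

/-- `μ(q,λ) = E[(B²/(λ²+B²))^q]` for a standard Gaussian `B`, written as an integral
against the standard Gaussian density. -/
noncomputable def structMoment (q l : ℝ) : ℝ :=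
  ∫ x : ℝ, (x ^ 2 / (l ^ 2 + x ^ 2)) ^ q * ((Real.sqrt (2 * Real.pi))⁻¹ * Real.exp (-x ^ 2 / 2))

open Set

lemma rpow_two' (x : ℝ) : x ^ (2:ℝ) = x ^ 2 := by
  rw [show (2:ℝ) = ((2:ℕ):ℝ) by norm_num, Real.rpow_natCast]

lemma betaReal {a b : ℝ} (ha : 0 < a) (hb : 0 < b) :
    ∫ x in (0:ℝ)..1, x ^ (a-1) * (1-x) ^ (b-1) = Gamma a * Gamma b / Gamma (a+b) := by
  have key : Complex.betaIntegral a b = ((∫ x in (0:ℝ)..1, x ^ (a-1) * (1-x) ^ (b-1) : ℝ) : ℂ) := by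
    rw [← intervalIntegral.integral_ofReal, Complex.betaIntegral]
    refine intervalIntegral.integral_congr fun x hx => ?_
    rw [Set.uIcc_of_le (by norm_num : (0:ℝ) ≤ 1)] at hx
    rw [Complex.ofReal_mul, Complex.ofReal_cpow hx.1,
      Complex.ofReal_cpow (by linarith [hx.2] : (0:ℝ) ≤ 1 - x)]
    push_cast
    ring_nf
  have h := Complex.Gamma_mul_Gamma_eq_betaIntegral
    (s := (a:ℂ)) (t := (b:ℂ)) (by simpa using ha) (by simpa using hb)
  rw [key] at h
  rw [show ((a:ℂ) + b) = ((a+b : ℝ) : ℂ) by push_cast; ring] at h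
  simp only [Complex.Gamma_ofReal, ← Complex.ofReal_mul] at h
  have h' := Complex.ofReal_injective h
  have hG : Real.Gamma (a+b) ≠ 0 := (Real.Gamma_pos_of_pos (by linarith)).ne'
  field_simp
  linarith [h']

lemma betaRealIntegrable {a b : ℝ} (ha : 0 < a) (hb : 0 < b) :
    IntegrableOn (fun x : ℝ => x ^ (a-1) * (1-x) ^ (b-1)) (Ioo 0 1) := by
  have h := Complex.betaIntegral_convergent (u := (a:ℂ)) (v := (b:ℂ))
    (by simpa using ha) (by simpa using hb)
  have h2 : IntegrableOn (fun x : ℝ => ‖(x:ℂ) ^ ((a:ℂ)-1) * (1-(x:ℂ)) ^ ((b:ℂ)-1)‖) (Ioc 0 1) := by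
    have := h.norm
    rwa [intervalIntegrable_iff_integrableOn_Ioc_of_le (by norm_num)] at this
  refine ((h2.mono_set Ioo_subset_Ioc_self).congr_fun ?_ measurableSet_Ioo)
  intro x hx
  simp only [norm_mul]
  rw [Complex.norm_cpow_eq_rpow_re_of_pos hx.1,
    show (1 - (x:ℂ)) = ((1-x:ℝ):ℂ) by push_cast; ring,
    Complex.norm_cpow_eq_rpow_re_of_pos (by linarith [hx.2])]
  simp

section
variable {a b : ℝ}

lemma hasDeriv_aux {u : ℝ} (hu : u ∈ Ioo (0:ℝ) 1) :
    HasDerivWithinAt (fun u : ℝ => u / (1 - u)) (((1-u)^2)⁻¹) (Ioo (0:ℝ) 1) u := by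
  have h1 : (1:ℝ) - u ≠ 0 := by have := hu.2; intro h; simp only [sub_eq_zero] at h; linarith
  have : HasDerivAt (fun u : ℝ => u / (1 - u))
      ((1 * (1 - u) - u * (0 - 1)) / ((1-u)^2)) u :=
    (hasDerivAt_id u).div ((hasDerivAt_const u 1).sub (hasDerivAt_id u)) h1
  refine this.hasDerivWithinAt.congr_deriv ?_
  rw [inv_eq_one_div]; congr 1; ring

lemma image_aux : (fun u : ℝ => u / (1 - u)) '' (Ioo 0 1) = Ioi 0 := by
  ext x
  constructor
  · rintro ⟨u, hu, rfl⟩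
    exact div_pos hu.1 (by linarith [hu.2])
  · intro hx
    have hx' : (0:ℝ) < x := hx
    refine ⟨x / (1 + x), ⟨div_pos hx' (by linarith), ?_⟩, ?_⟩
    · rw [div_lt_one (by linarith)]; linarith
    · have h1 : (1:ℝ) + x ≠ 0 := by positivity
      field_simp; ring

lemma inj_aux : InjOn (fun u : ℝ => u / (1 - u)) (Ioo 0 1) := by
  intro u hu v hv h
  have h1 : (1:ℝ) - u ≠ 0 := by have := hu.2; intro h; simp only [sub_eq_zero] at h; linarith
  have h2 : (1:ℝ) - v ≠ 0 := by have := hv.2; intro h; simp only [sub_eq_zero] at h; linarith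
  field_simp at h
  linarith

lemma integrand_aux (ha : 0 < a) (hb : 0 < b) {u : ℝ} (hu : u ∈ Ioo (0:ℝ) 1) :
    |((1-u)^2)⁻¹| • ((u/(1-u)) ^ (a-1) * (1 + u/(1-u)) ^ (-(a+b)))
      = u ^ (a-1) * (1-u) ^ (b-1) := by
  have h0 : (0:ℝ) < u := hu.1
  have h1 : (0:ℝ) < 1 - u := by linarith [hu.2]
  have e1 : (1:ℝ) + u/(1-u) = (1-u)⁻¹ := by field_simp; ring
  rw [smul_eq_mul, abs_of_pos (by positivity), e1, div_rpow h0.le h1.le,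
    div_eq_mul_inv, ← Real.rpow_neg h1.le,
    show ((1-u)^2)⁻¹ = (1-u)^(-2:ℝ) by rw [← rpow_two', ← Real.rpow_neg h1.le],
    ← Real.rpow_neg_one (1-u), ← Real.rpow_mul h1.le]
  rw [show (1-u)^(-2:ℝ) * (u ^ (a-1) * (1-u) ^ (-(a-1)) * (1-u) ^ (-1 * -(a+b)))
      = u ^ (a-1) * ((1-u) ^ (-(a-1)) * ((1-u) ^ (-1 * -(a+b)) * (1-u)^(-2:ℝ))) by ring,
    ← Real.rpow_add h1, ← Real.rpow_add h1]
  congr 1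
  congr 1
  ring


lemma betaIoi (ha : 0 < a) (hb : 0 < b) :
    ∫ x in Ioi (0:ℝ), x ^ (a-1) * (1+x) ^ (-(a+b)) = Gamma a * Gamma b / Gamma (a+b) := by
  have key := integral_image_eq_integral_abs_deriv_smul measurableSet_Ioo
    (fun u hu => hasDeriv_aux hu) inj_aux (fun x => x ^ (a-1) * (1+x) ^ (-(a+b)))
  rw [image_aux] at key
  rw [key, setIntegral_congr_fun measurableSet_Ioo (fun u hu => integrand_aux ha hb hu),
    ← MeasureTheory.integral_Ioc_eq_integral_Ioo,
    ← intervalIntegral.integral_of_le (by norm_num : (0:ℝ) ≤ 1)]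
  exact betaReal ha hb

lemma betaIoiIntegrable (ha : 0 < a) (hb : 0 < b) :
    IntegrableOn (fun x : ℝ => x ^ (a-1) * (1+x) ^ (-(a+b))) (Ioi 0) := by
  have key := integrableOn_image_iff_integrableOn_abs_deriv_smul measurableSet_Ioo
    (fun u hu => hasDeriv_aux hu) inj_aux (fun x : ℝ => x ^ (a-1) * (1+x) ^ (-(a+b)))
  rw [image_aux] at key
  rw [key]
  exact ((betaRealIntegrable ha hb).congr_fun
    (fun u hu => (integrand_aux ha hb hu).symm) measurableSet_Ioo)

end
section
variable {p r : ℝ}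

lemma sq_image_Ioi : (fun x : ℝ => x ^ 2) '' (Ioi 0) = Ioi 0 := by
  ext x
  constructor
  · rintro ⟨y, hy, rfl⟩; exact pow_pos (mem_Ioi.mp hy) 2
  · intro hx
    have hx' : (0:ℝ) < x := hx
    exact ⟨Real.sqrt x, Real.sqrt_pos.mpr hx', Real.sq_sqrt hx'.le⟩

lemma sq_injOn : InjOn (fun x : ℝ => x ^ 2) (Ioi 0) := by
  intro x hx y hy h
  simp only at h
  have hx' : (0:ℝ) < x := hx
  have hy' : (0:ℝ) < y := hy
  nlinarith [sq_nonneg (x - y), sq_nonneg (x + y)]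

lemma sq_hasDeriv {x : ℝ} (_ : x ∈ Ioi (0:ℝ)) :
    HasDerivWithinAt (fun x : ℝ => x ^ 2) (2 * x) (Ioi 0) x := by
  simpa using (hasDerivAt_pow 2 x).hasDerivWithinAt

lemma Jval (hp : -(1/2:ℝ) < p) (hr : -(1/2:ℝ) < r) :
    ∫ t in Ioi (0:ℝ), t ^ (2*p) * (1+t^2) ^ (-(p+r+1))
      = Gamma (p+1/2) * Gamma (r+1/2) / (2 * Gamma (p+r+1)) := by
  have key := integral_comp_rpow_Ioi_of_pos
    (g := fun y => (1/2 : ℝ) * (y ^ (p+1/2-1) * (1+y) ^ (-(p+1/2+(r+1/2))))) (two_pos)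
  have e1 : ∀ x ∈ Ioi (0:ℝ), ((2:ℝ) * x ^ ((2:ℝ)-1)) •
      ((1/2 : ℝ) * ((x^(2:ℝ)) ^ (p+1/2-1) * (1+x^(2:ℝ)) ^ (-(p+1/2+(r+1/2)))))
      = x ^ (2*p) * (1+x^2) ^ (-(p+r+1)) := by
    intro x hx
    have hx' : (0:ℝ) < x := hx
    rw [smul_eq_mul, rpow_two', show (2:ℝ)-1 = 1 by norm_num, rpow_one,
      show -(p+1/2+(r+1/2)) = -(p+r+1) by ring,
      ← Real.rpow_natCast x 2, ← Real.rpow_mul hx'.le, Real.rpow_natCast x 2]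
    rw [show (2:ℝ) * x * (1/2 * (x ^ (((2:ℕ):ℝ) * (p+1/2-1)) * (1+x^2) ^ (-(p+r+1))))
        = (x * x ^ (((2:ℕ):ℝ) * (p+1/2-1))) * (1+x^2) ^ (-(p+r+1)) by ring]
    have e2 : x * x ^ (((2:ℕ):ℝ)*(p+1/2-1)) = x ^ (2*p) := by
      nth_rewrite 1 [← Real.rpow_one x]
      rw [← Real.rpow_add hx', show (1:ℝ) + ((2:ℕ):ℝ)*(p+1/2-1) = 2*p by push_cast; ring]
    rw [e2]
  rw [← setIntegral_congr_fun measurableSet_Ioi e1, key, MeasureTheory.integral_const_mul,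
    betaIoi (by linarith : (0:ℝ) < p+1/2) (by linarith : (0:ℝ) < r+1/2),
    show p+1/2+(r+1/2) = p+r+1 by ring]
  ring

lemma JIntegrable (hp : -(1/2:ℝ) < p) (hr : -(1/2:ℝ) < r) :
    IntegrableOn (fun t : ℝ => t ^ (2*p) * (1+t^2) ^ (-(p+r+1))) (Ioi 0) := by
  have key := integrableOn_image_iff_integrableOn_abs_deriv_smul measurableSet_Ioi
    (fun x hx => sq_hasDeriv hx) sq_injOn
    (fun y : ℝ => y ^ (p+1/2-1) * (1+y) ^ (-(p+1/2+(r+1/2))))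
  rw [sq_image_Ioi] at key
  have h1 : IntegrableOn
      (fun x : ℝ => |2*x| • ((x^2:ℝ) ^ (p+1/2-1) * (1+(x^2:ℝ)) ^ (-(p+1/2+(r+1/2))))) (Ioi 0) :=
    key.mp (betaIoiIntegrable (by linarith : (0:ℝ) < p+1/2) (by linarith : (0:ℝ) < r+1/2))
  have h2 := h1.const_mul (2⁻¹ : ℝ)
  refine IntegrableOn.congr_fun h2 (fun x hx => ?_) measurableSet_Ioi
  have hx' : (0:ℝ) < x := hx
  have e2 : (x^2:ℝ) ^ (p+1/2-1) = x ^ (2*p) / x := by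
    rw [← Real.rpow_natCast x 2, ← Real.rpow_mul hx'.le,
      show ((2:ℕ):ℝ) * (p+1/2-1) = 2*p - 1 by push_cast; ring,
      Real.rpow_sub hx', Real.rpow_one]
  rw [smul_eq_mul, abs_of_pos (by linarith), e2,
    show -(p+1/2+(r+1/2)) = -(p+r+1) by ring]
  field_simp

end

lemma rpow_two'' (x : ℝ) : x ^ (2:ℝ) = x ^ 2 := by
  rw [show (2:ℝ) = ((2:ℕ):ℝ) by norm_num, Real.rpow_natCast]

lemma gaussInt {s b : ℝ} (hs : -1 < s) (hb : 0 < b) :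
    ∫ l in Ioi (0:ℝ), l ^ s * Real.exp (-b * l^2)
      = b ^ (-(s+1)/2) * (1/2) * Gamma ((s+1)/2) := by
  have := integral_rpow_mul_exp_neg_mul_rpow (p := 2) (q := s) (b := b) two_pos hs hb
  simp_rw [rpow_two''] at this
  rw [this]

lemma gaussIntegrable {s b : ℝ} (hs : -1 < s) (hb : 0 < b) :
    IntegrableOn (fun l : ℝ => l ^ s * Real.exp (-b * l^2)) (Ioi 0) := by
  have := integrableOn_rpow_mul_exp_neg_mul_rpow (p := 2) (s := s) (b := b) hs two_pos hb
  simpa only [rpow_two''] using this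

section
variable {q θ : ℝ}

/-- The two-variable kernel after substitution. -/
noncomputable def Hker (q θ : ℝ) (l t : ℝ) : ℝ :=
  (t^2/(1+t^2)) ^ q * (l ^ (2*θ+1) * Real.exp (-((1+t^2)/2) * l^2))

lemma Hker_cont :
    ContinuousOn (Function.uncurry (Hker q θ)) (Ioi (0:ℝ) ×ˢ Ioi (0:ℝ)) := by
  have h1 : Continuous fun p : ℝ × ℝ => p.2^2/(1+p.2^2) := by
    refine (continuous_snd.pow 2).div (by continuity) fun p => by positivity
  have h2 : ContinuousOn (fun p : ℝ × ℝ => (p.2^2/(1+p.2^2)) ^ q)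
      (Ioi (0:ℝ) ×ˢ Ioi (0:ℝ)) := by
    refine ContinuousOn.rpow_const h1.continuousOn fun p hp => Or.inl ?_
    have := hp.2
    have hp2 : (0:ℝ) < p.2 := this
    positivity
  have h3 : ContinuousOn (fun p : ℝ × ℝ => p.1 ^ (2*θ+1))
      (Ioi (0:ℝ) ×ˢ Ioi (0:ℝ)) := by
    refine ContinuousOn.rpow_const continuous_fst.continuousOn fun p hp => Or.inl ?_
    exact ne_of_gt hp.1
  have h4 : Continuous fun p : ℝ × ℝ => Real.exp (-((1+p.2^2)/2) * p.1^2) := by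
    continuity
  exact h2.mul (h3.mul h4.continuousOn)

lemma Hker_aesm :
    AEStronglyMeasurable (Function.uncurry (Hker q θ))
      ((volume.restrict (Ioi (0:ℝ))).prod (volume.restrict (Ioi (0:ℝ)))) := by
  rw [Measure.prod_restrict]
  exact Hker_cont.aestronglyMeasurable (measurableSet_Ioi.prod measurableSet_Ioi)

lemma Hker_inner (hθ : θ > -(1/2:ℝ)) {t : ℝ} (ht : 0 < t) :
    ∫ l in Ioi (0:ℝ), Hker q θ l t
      = (t^2/(1+t^2)) ^ q * (((1+t^2)/2) ^ (-(θ+1)) * ((1/2) * Gamma (θ+1))) := by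
  unfold Hker
  rw [MeasureTheory.integral_const_mul, gaussInt (by linarith) (by positivity)]
  rw [show -(2*θ+1+1)/2 = -(θ+1) by ring, show (2*θ+1+1)/2 = θ+1 by ring]
  ring

lemma Hker_integrable_slice (hθ : θ > -(1/2:ℝ)) {t : ℝ} (ht : 0 < t) :
    Integrable (fun l => Hker q θ l t) (volume.restrict (Ioi 0)) := by
  unfold Hker
  exact (gaussIntegrable (by linarith : (-1:ℝ) < 2*θ+1) (by positivity)).const_mul _

end

section
variable {q θ : ℝ}

lemma Vsimp (hθ : θ > -(1/2:ℝ)) {t : ℝ} (ht : 0 < t) :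
    (t^2/(1+t^2)) ^ q * (((1+t^2)/2) ^ (-(θ+1):ℝ) * ((1/2) * Gamma (θ+1)))
      = (2 ^ (θ+1:ℝ) * ((1/2) * Gamma (θ+1))) * (t ^ (2*q) * (1+t^2) ^ (-(q+θ+1))) := by
  have h1 : (0:ℝ) < 1+t^2 := by positivity
  rw [div_rpow (sq_nonneg t) h1.le, div_rpow h1.le (by norm_num : (0:ℝ) ≤ 2),
    ← Real.rpow_natCast t 2, ← Real.rpow_mul ht.le,
    show ((2:ℕ):ℝ)*q = 2*q by push_cast; ring,
    Real.rpow_natCast t 2]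
  rw [Real.rpow_neg (by norm_num : (0:ℝ) ≤ 2), div_inv_eq_mul,
    div_eq_mul_inv (t ^ (2*q)), ← Real.rpow_neg h1.le]
  rw [show t ^ (2*q) * (1+t^2) ^ (-q) * ((1+t^2) ^ (-(θ+1):ℝ) * 2 ^ (θ+1:ℝ) * (1/2 * Gamma (θ+1)))
      = (2 ^ (θ+1:ℝ) * (1/2 * Gamma (θ+1))) * (t ^ (2*q) * ((1+t^2) ^ (-q) * (1+t^2) ^ (-(θ+1):ℝ)))
      by ring, ← Real.rpow_add h1, show -q + -(θ+1) = -(q+θ+1) by ring]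

section
variable {q θ : ℝ}

lemma Hker_prod_integrable (hq : q > -(1/2:ℝ)) (hθ : θ > -(1/2:ℝ)) :
    Integrable (Function.uncurry (Hker q θ))
      ((volume.restrict (Ioi (0:ℝ))).prod (volume.restrict (Ioi (0:ℝ)))) := by
  rw [integrable_prod_iff' Hker_aesm]
  constructor
  · filter_upwards [ae_restrict_mem measurableSet_Ioi] with t ht
    exact Hker_integrable_slice hθ ht
  · have hJ := (JIntegrable hq hθ).const_mul (2 ^ (θ+1:ℝ) * ((1/2) * Gamma (θ+1)))
    refine hJ.congr ?_
    filter_upwards [ae_restrict_mem measurableSet_Ioi] with t ht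
    have e0 : ∫ l in Ioi (0:ℝ), ‖Hker q θ l t‖ = ∫ l in Ioi (0:ℝ), Hker q θ l t := by
      refine setIntegral_congr_fun measurableSet_Ioi fun l hl => ?_
      have hl' : (0:ℝ) < l := hl
      have hnn : 0 ≤ Hker q θ l t := by
        unfold Hker; positivity
      exact Real.norm_of_nonneg hnn
    simp only [Function.uncurry]
    rw [e0, Hker_inner hθ ht, Vsimp hθ ht]

end

section
variable {q θ : ℝ}

lemma structMoment_even (q l : ℝ) :
    structMoment q l = 2 * ∫ x in Ioi (0:ℝ),
      (x ^ 2 / (l ^ 2 + x ^ 2)) ^ q * ((Real.sqrt (2 * Real.pi))⁻¹ * Real.exp (-x ^ 2 / 2)) := by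
  rw [← integral_comp_abs (f := fun x =>
    (x ^ 2 / (l ^ 2 + x ^ 2)) ^ q * ((Real.sqrt (2 * Real.pi))⁻¹ * Real.exp (-x ^ 2 / 2)))]
  unfold structMoment
  congr 1
  funext x
  rw [sq_abs]

lemma step1 (hθ : θ > -(1/2:ℝ)) {l : ℝ} (hl : 0 < l) :
    l ^ (2*θ) * structMoment q l * ((Real.sqrt (2*Real.pi))⁻¹ * Real.exp (-l^2/2))
      = (2 * ((Real.sqrt (2*Real.pi))⁻¹)^2) * ∫ t in Ioi (0:ℝ), Hker q θ l t := by
  set c : ℝ := (Real.sqrt (2*Real.pi))⁻¹ with hc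
  have hs : (0:ℝ) < Real.sqrt (2*Real.pi) := Real.sqrt_pos.mpr (by positivity)
  have hsc : Real.sqrt (2*Real.pi) * c = 1 := mul_inv_cancel₀ hs.ne'
  set G : ℝ → ℝ := fun x => (x ^ 2 / (l ^ 2 + x ^ 2)) ^ q * (c * Real.exp (-x ^ 2 / 2)) with hG
  have hA : structMoment q l = 2 * ∫ x in Ioi (0:ℝ), G x := structMoment_even q l
  have hB : ∫ x in Ioi (0:ℝ), G x = l * ∫ t in Ioi (0:ℝ), G (l*t) := by
    have h := MeasureTheory.integral_comp_mul_left_Ioi G 0 hl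
    rw [mul_zero, smul_eq_mul] at h
    rw [h, ← mul_assoc, mul_inv_cancel₀ hl.ne', one_mul]
  have hC : ∀ t ∈ Ioi (0:ℝ), Hker q θ l t
      = (l ^ (2*θ+1) * Real.exp (-l^2/2) * Real.sqrt (2*Real.pi)) * G (l*t) := by
    intro t ht
    have ht' : (0:ℝ) < t := ht
    have e1 : (l*t)^2 / (l^2 + (l*t)^2) = t^2/(1+t^2) := by
      rw [mul_pow]
      rw [show l^2 + l^2*t^2 = l^2 * (1+t^2) by ring]
      rw [mul_div_mul_left _ _ (by positivity : l^2 ≠ 0)]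
    have e2 : Real.exp (-((1+t^2)/2) * l^2)
        = Real.exp (-l^2/2) * Real.exp (-(l*t)^2/2) := by
      rw [← Real.exp_add]
      congr 1
      ring
    unfold Hker
    simp only [hG]
    rw [e1, e2]
    linear_combination (-((t^2/(1+t^2)) ^ q * (l ^ (2*θ+1) *
      (Real.exp (-l^2/2) * Real.exp (-(l*t)^2/2))))) * hsc
  have hD : ∫ t in Ioi (0:ℝ), Hker q θ l t
      = (l ^ (2*θ+1) * Real.exp (-l^2/2) * Real.sqrt (2*Real.pi)) * ∫ t in Ioi (0:ℝ), G (l*t) := by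
    rw [setIntegral_congr_fun measurableSet_Ioi hC, MeasureTheory.integral_const_mul]
  have hl1 : l ^ (2*θ+1) = l ^ (2*θ) * l := by
    rw [Real.rpow_add_one hl.ne']
  rw [hA, hB, hD, hl1]
  linear_combination (-(2 * l ^ (2*θ) * l * Real.exp (-l^2/2) * c *
    ∫ t in Ioi (0:ℝ), G (l*t))) * hsc
end

theorem structMoment_mellin_identity (q θ : ℝ) (hq : q > -(1 / 2)) (hθ : θ > -(1 / 2)) :
    (2 / (2 ^ θ * Real.Gamma (θ + 1 / 2) / Real.sqrt Real.pi)) *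
        ∫ l in Set.Ioi (0 : ℝ),
          l ^ (2 * θ) * structMoment q l * ((Real.sqrt (2 * Real.pi))⁻¹ * Real.exp (-l ^ 2 / 2))
      = Real.Gamma (θ + 1) * Real.Gamma (q + 1 / 2) /
          (Real.Gamma (1 / 2) * Real.Gamma (q + θ + 1)) := by
  have h1 : ∫ l in Set.Ioi (0:ℝ),
        l ^ (2*θ) * structMoment q l * ((Real.sqrt (2*Real.pi))⁻¹ * Real.exp (-l^2/2))
      = (2 * ((Real.sqrt (2*Real.pi))⁻¹)^2) * ∫ t in Ioi (0:ℝ), ∫ l in Ioi (0:ℝ), Hker q θ l t := by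
    rw [setIntegral_congr_fun measurableSet_Ioi (fun l hl => step1 hθ hl),
      MeasureTheory.integral_const_mul]
    congr 1
    exact integral_integral_swap (Hker_prod_integrable hq hθ)
  rw [h1]
  have h2 : ∫ t in Ioi (0:ℝ), ∫ l in Ioi (0:ℝ), Hker q θ l t
      = (2 ^ (θ+1:ℝ) * ((1/2) * Gamma (θ+1)))
          * (Gamma (q+1/2) * Gamma (θ+1/2) / (2 * Gamma (q+θ+1))) := by
    rw [setIntegral_congr_fun measurableSet_Ioi
        (fun t ht => by rw [Hker_inner hθ ht, Vsimp hθ ht]),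
      MeasureTheory.integral_const_mul, Jval hq hθ]
  rw [h2]
  have e1 : ((Real.sqrt (2*Real.pi))⁻¹)^2 = (2*Real.pi)⁻¹ := by
    rw [inv_pow, Real.sq_sqrt (by positivity : (0:ℝ) ≤ 2*Real.pi)]
  have e2 : (2:ℝ)^(θ+1:ℝ) = 2^θ * 2 := by rw [Real.rpow_add_one (by norm_num) θ]
  have e3 : Real.Gamma (1/2 : ℝ) = Real.sqrt Real.pi := Real.Gamma_one_half_eq
  have hsq : Real.sqrt Real.pi * Real.sqrt Real.pi = Real.pi :=
    Real.mul_self_sqrt Real.pi_pos.le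
  have h2θ : (2:ℝ)^(θ:ℝ) ≠ 0 := (Real.rpow_pos_of_pos two_pos θ).ne'
  have hGθ : Real.Gamma (θ+1/2) ≠ 0 := (Real.Gamma_pos_of_pos (by linarith)).ne'
  have hGqθ : Real.Gamma (q+θ+1) ≠ 0 := (Real.Gamma_pos_of_pos (by linarith)).ne'
  have hsπ : Real.sqrt Real.pi ≠ 0 := (Real.sqrt_pos.mpr Real.pi_pos).ne'
  rw [e1, e2, e3]
  field_simp
  rw [div_eq_iff (by
    have hGθ' : Real.Gamma ((2*θ+1)/2) ≠ 0 := by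
      rw [show (2*θ+1)/2 = θ+1/2 by ring]; exact hGθ
    positivity)]
  linear_combination (Real.Gamma ((2*θ+1)/2) * Real.Gamma (θ+1)
    * Real.Gamma ((2*q+1)/2)) * hsq

end
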